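/- Let V ≥ 2 and N = V(V−1)/2. For every probability mass function p : {0,1}^N → [0,1] with Σ_{a∈{0,1}^N} p(a) = 1 and p(a) > 0 for all a ∈ {0,1}^N, there exist H ∈ ℕ, weights ν = (ν_1,…,ν_H) in the simplex Δ_H, a vector Z ∈ ℝ^N, an integer R ≥ 1, and for each h = 1,…,H a matrix X^{(h)} ∈ ℝ^{V×R} and a vector λ^{(h)} ∈ ℝ^R with nonnegative entries, such that for all a ∈ {0,1}^N, p(a) = Σ_{h=1}^H ν_h ∏_{l=1}^N (π^{(h)}_l)^{a_l} (1−π^{(h)}_l)^{1−a_l}, where π^{(h)}_l = 1/(1 + exp(−Z_l − L(X^{(h)} Λ^{(h)} X^{(h)T})_l)) and Λ^{(h)} is the R×R diagonal matrix with diagonal λ^{(h)}. -/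

import Mathlib

open Matrix

/-- The index set of edges: pairs `(v, u)` with `u < v`, of cardinality `V(V-1)/2`. -/
abbrev EdgeIdx (V : ℕ) := {q : Fin V × Fin V // q.2 < q.1}

namespace MixAux

noncomputable def kkf (ε : ℝ) (x y : Bool) : ℝ :=
  if x = y then (1-ε)/(1-2*ε) else -ε/(1-2*ε)

noncomputable def ggf (ε : ℝ) (x y : Bool) : ℝ := if x = y then 1-ε else ε

noncomputable def nuf {V : ℕ} (p : (EdgeIdx V → Bool) → ℝ) (ε : ℝ)
    (b : EdgeIdx V → Bool) : ℝ :=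
  ∑ a, p a * ∏ l, kkf ε (b l) (a l)

variable {V : ℕ}

lemma hval (p : (EdgeIdx V → Bool) → ℝ) (b : EdgeIdx V → Bool) :
    ∑ a, p a * ∏ l, (if b l = a l then (1:ℝ) else 0) = p b := by
  classical
  rw [Finset.sum_eq_single b]
  · simp
  · intro a _ hab
    obtain ⟨l, hl⟩ : ∃ l, b l ≠ a l := by
      by_contra h
      push_neg at h
      exact hab (funext fun l => (h l).symm)
    rw [Finset.prod_eq_zero (Finset.mem_univ l) (by simp [hl])]
    ring
  · simp

lemma hswap (F : EdgeIdx V → Bool → ℝ) :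
    ∑ b : EdgeIdx V → Bool, ∏ l, F l (b l) = ∏ l, (F l true + F l false) := by
  classical
  rw [← Fintype.prod_sum F]
  exact Finset.prod_congr rfl fun l _ => by rw [Fintype.sum_bool]

lemma tendsto_kkf (x y : Bool) :
    Filter.Tendsto (fun ε : ℝ => kkf ε x y) (nhds 0)
      (nhds (if x = y then (1:ℝ) else 0)) := by
  have h2 : Filter.Tendsto (fun ε : ℝ => 1 - 2*ε) (nhds 0) (nhds 1) := by
    have hc : Continuous (fun ε : ℝ => 1 - 2*ε) := by continuity
    simpa using hc.tendsto 0
  by_cases h : x = y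
  · have h1 : Filter.Tendsto (fun ε : ℝ => 1 - ε) (nhds 0) (nhds 1) := by
      have hc : Continuous (fun ε : ℝ => 1 - ε) := by continuity
      simpa using hc.tendsto 0
    convert h1.div h2 one_ne_zero using 1
    · funext ε; simp [kkf, h]
    · simp [h]
  · have h1 : Filter.Tendsto (fun ε : ℝ => -ε) (nhds 0) (nhds 0) := by
      simpa using (continuous_neg.tendsto (0:ℝ))
    convert h1.div h2 one_ne_zero using 1
    · funext ε; simp [kkf, h]
    · simp [h]

lemma kkf_sum (ε : ℝ) (h : 1 - 2*ε ≠ 0) (y : Bool) :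
    kkf ε true y + kkf ε false y = 1 := by
  have h' : 1 - ε*2 ≠ 0 := by rwa [mul_comm] at h
  cases y <;> simp [kkf] <;> field_simp <;> ring

lemma kkf_gg (ε : ℝ) (h : 1 - 2*ε ≠ 0) (x y : Bool) :
    kkf ε true x * ggf ε true y + kkf ε false x * ggf ε false y
      = if y = x then (1:ℝ) else 0 := by
  have h' : 1 - ε*2 ≠ 0 := by rwa [mul_comm] at h
  cases x <;> cases y <;> simp [kkf, ggf] <;> field_simp <;> ring

lemma gram {R : ℕ} (t : EdgeIdx V → ℝ) (e : Fin R ≃ EdgeIdx V) (l0 : EdgeIdx V) :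
    (∑ r, (if (e r).1.1 = l0.1.1 then t (e r) else if (e r).1.2 = l0.1.1 then 1 else 0) *
          (if (e r).1.1 = l0.1.2 then t (e r) else if (e r).1.2 = l0.1.2 then 1 else 0))
      = t l0 := by
  classical
  rw [Equiv.sum_comp e (fun l =>
    (if l.1.1 = l0.1.1 then t l else if l.1.2 = l0.1.1 then 1 else 0) *
    (if l.1.1 = l0.1.2 then t l else if l.1.2 = l0.1.2 then 1 else 0))]
  rw [Finset.sum_eq_single l0]
  · obtain ⟨⟨v, u⟩, huv⟩ := l0
    have hvu : ¬ (v = u) := by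
      rintro rfl; exact absurd huv (lt_irrefl _)
    simp [hvu]
  · rintro ⟨⟨c, d⟩, hdc⟩ _ hne
    obtain ⟨⟨v, u⟩, huv⟩ := l0
    simp only at hdc huv ⊢
    by_cases h1 : c = v
    · by_cases h2 : c = u
      · exfalso; rw [h1] at h2; rw [h2] at huv; exact absurd huv (lt_irrefl _)
      · by_cases h3 : d = u
        · exfalso; apply hne; subst h1; subst h3; rfl
        · simp [h1, h2, h3]
          rintro rfl; exact absurd huv (lt_irrefl _)
    · by_cases h4 : d = v
      · by_cases h2 : c = u
        · exfalso; rw [h4] at hdc; rw [h2] at hdc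
          exact absurd (hdc.trans huv) (lt_irrefl _)
        · by_cases h3 : d = u
          · exfalso; rw [h4] at h3; rw [h3] at huv; exact absurd huv (lt_irrefl _)
          · simp [h1, h4, h2, h3]
            rintro rfl; exact absurd huv (lt_irrefl _)
      · simp [h1, h4]
  · simp

end MixAux

namespace MixAux

lemma logistic (x : ℝ) (h0 : 0 < x) (h1 : x < 1) :
    1 / (1 + Real.exp (-Real.log (x / (1 - x)))) = x := by
  have h1' : 0 < 1 - x := by linarith
  rw [Real.exp_neg, Real.exp_log (by positivity)]
  rw [show (x / (1 - x))⁻¹ = (1 - x) / x by rw [inv_div]]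
  rw [show 1 + (1 - x) / x = 1 / x by field_simp; ring]
  simp [h0.ne']

lemma main_id {V : ℕ} (p : (EdgeIdx V → Bool) → ℝ) (ε : ℝ) (h2ne : 1 - 2*ε ≠ 0)
    (a : EdgeIdx V → Bool) :
    ∑ b, nuf p ε b * ∏ l, ggf ε (b l) (a l) = p a := by
  classical
  calc ∑ b, nuf p ε b * ∏ l, ggf ε (b l) (a l)
      = ∑ b : EdgeIdx V → Bool, ∑ a', p a' *
          ((∏ l, kkf ε (b l) (a' l)) * ∏ l, ggf ε (b l) (a l)) := by
        simp_rw [nuf, Finset.sum_mul, mul_assoc]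
    _ = ∑ a', p a' * ∑ b : EdgeIdx V → Bool,
          ∏ l, (kkf ε (b l) (a' l) * ggf ε (b l) (a l)) := by
        rw [Finset.sum_comm]
        refine Finset.sum_congr rfl fun a' _ => ?_
        rw [Finset.mul_sum]
        exact Finset.sum_congr rfl fun b _ => by rw [← Finset.prod_mul_distrib]
    _ = ∑ a', p a' * ∏ l, (if a l = a' l then (1:ℝ) else 0) := by
        refine Finset.sum_congr rfl fun a' _ => ?_
        rw [hswap (fun l x => kkf ε x (a' l) * ggf ε x (a l))]
        exact congrArg _ (Finset.prod_congr rfl fun l _ => kkf_gg ε h2ne (a' l) (a l))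
    _ = p a := hval p a

lemma sum_nuf {V : ℕ} (p : (EdgeIdx V → Bool) → ℝ) (ε : ℝ) (h2ne : 1 - 2*ε ≠ 0)
    (hsum : ∑ a : EdgeIdx V → Bool, p a = 1) :
    ∑ b : EdgeIdx V → Bool, nuf p ε b = 1 := by
  classical
  calc ∑ b : EdgeIdx V → Bool, nuf p ε b
      = ∑ a, p a * ∑ b : EdgeIdx V → Bool, ∏ l, kkf ε (b l) (a l) := by
        simp_rw [nuf]
        rw [Finset.sum_comm]
        exact Finset.sum_congr rfl fun a _ => (Finset.mul_sum _ _ _).symm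
    _ = ∑ a, p a * ∏ l : EdgeIdx V, (kkf ε true (a l) + kkf ε false (a l)) := by
        exact Finset.sum_congr rfl fun a _ => by rw [hswap (fun l x => kkf ε x (a l))]
    _ = ∑ a, p a := by
        refine Finset.sum_congr rfl fun a _ => ?_
        rw [Finset.prod_congr rfl fun l _ => kkf_sum ε h2ne (a l)]
        simp
    _ = 1 := hsum

lemma tendsto_nuf {V : ℕ} (p : (EdgeIdx V → Bool) → ℝ) (b : EdgeIdx V → Bool) :
    Filter.Tendsto (fun ε => nuf p ε b) (nhds 0) (nhds (p b)) := by
  classical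
  have h : Filter.Tendsto (fun ε => nuf p ε b) (nhds 0)
      (nhds (∑ a, p a * ∏ l, (if b l = a l then (1:ℝ) else 0))) := by
    apply tendsto_finset_sum
    intro a _
    exact tendsto_const_nhds.mul
      (tendsto_finset_prod _ fun l _ => tendsto_kkf (b l) (a l))
  rwa [hval p b] at h

end MixAux

open MixAux in
/-- **Lemma 2.1**: any strictly positive pmf on the space of binary undirected networks
admits a mixture-of-low-rank-logistic-factorizations representation. -/
theorem mixture_lowrank_representation (V : ℕ) (hV : 2 ≤ V)
    (p : (EdgeIdx V → Bool) → ℝ)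
    (hsum : ∑ a : EdgeIdx V → Bool, p a = 1)
    (hpos : ∀ a : EdgeIdx V → Bool, 0 < p a) :
    ∃ (H : ℕ) (ν : Fin H → ℝ) (Z : EdgeIdx V → ℝ) (R : ℕ)
      (X : Fin H → Matrix (Fin V) (Fin R) ℝ) (lam : Fin H → Fin R → ℝ),
      1 ≤ R ∧
      (∀ h, 0 ≤ ν h) ∧ (∑ h, ν h = 1) ∧
      (∀ h r, 0 ≤ lam h r) ∧
      (∀ a : EdgeIdx V → Bool,
        p a = ∑ h, ν h * ∏ l : EdgeIdx V,
          (if a l then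
            1 / (1 + Real.exp (-(Z l +
              (X h * Matrix.diagonal (lam h) * (X h)ᵀ) l.1.1 l.1.2)))
          else
            1 - 1 / (1 + Real.exp (-(Z l +
              (X h * Matrix.diagonal (lam h) * (X h)ᵀ) l.1.1 l.1.2))))) := by
  classical
  -- choose ε
  obtain ⟨ε, hνpos, hεhalf, hε0⟩ :
      ∃ ε : ℝ, (∀ b, 0 < nuf p ε b) ∧ ε < 1/2 ∧ 0 < ε := by
    have h1 : ∀ᶠ ε in nhdsWithin (0:ℝ) (Set.Ioi 0), ∀ b, 0 < nuf p ε b := by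
      rw [Filter.eventually_all]
      intro b
      exact ((tendsto_nuf p b).eventually
        (eventually_gt_nhds (hpos b))).filter_mono nhdsWithin_le_nhds
    have h2 : ∀ᶠ ε in nhdsWithin (0:ℝ) (Set.Ioi 0), ε < 1/2 :=
      (eventually_lt_nhds (by norm_num : (0:ℝ) < 1/2)).filter_mono nhdsWithin_le_nhds
    have h3 : ∀ᶠ ε in nhdsWithin (0:ℝ) (Set.Ioi 0), 0 < ε := by
      filter_upwards [self_mem_nhdsWithin] with ε hε using hε
    exact (h1.and (h2.and h3)).exists
  have h2ne : 1 - 2*ε ≠ 0 := by linarith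
  have hg0 : ∀ x : Bool, 0 < ggf ε x true := by
    intro x; cases x <;> simp [ggf] <;> linarith
  have hg1 : ∀ x : Bool, ggf ε x true < 1 := by
    intro x; cases x <;> simp [ggf] <;> linarith
  -- set up the components
  set eH := (Fintype.equivFin (EdgeIdx V → Bool)).symm with heH
  set eR := (Fintype.equivFin (EdgeIdx V)).symm with heR
  set tt : (EdgeIdx V → Bool) → EdgeIdx V → ℝ :=
    fun b l => Real.log (ggf ε (b l) true / (1 - ggf ε (b l) true)) with htt
  refine ⟨Fintype.card (EdgeIdx V → Bool), fun h => nuf p ε (eH h), fun _ => 0,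
    Fintype.card (EdgeIdx V),
    fun h => Matrix.of fun v r =>
      if (eR r).1.1 = v then tt (eH h) (eR r) else if (eR r).1.2 = v then 1 else 0,
    fun _ _ => 1, ?_, ?_, ?_, ?_, ?_⟩
  · have : Nonempty (EdgeIdx V) :=
      ⟨⟨(⟨1, by omega⟩, ⟨0, by omega⟩), by simp [Fin.lt_def]⟩⟩
    exact Fintype.card_pos
  · exact fun h => (hνpos _).le
  · rw [Equiv.sum_comp eH (nuf p ε)]
    exact sum_nuf p ε h2ne hsum
  · exact fun _ _ => zero_le_one
  · intro a
    have hentry : ∀ (h : Fin (Fintype.card (EdgeIdx V → Bool))) (l : EdgeIdx V),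
        ((Matrix.of fun v r =>
            if (eR r).1.1 = v then tt (eH h) (eR r)
            else if (eR r).1.2 = v then (1:ℝ) else 0) *
          Matrix.diagonal (fun _ : Fin (Fintype.card (EdgeIdx V)) => (1:ℝ)) *
          (Matrix.of fun v r =>
            if (eR r).1.1 = v then tt (eH h) (eR r)
            else if (eR r).1.2 = v then (1:ℝ) else 0)ᵀ) l.1.1 l.1.2
          = tt (eH h) l := by
      intro h l
      rw [Matrix.diagonal_one, Matrix.mul_one, Matrix.mul_apply]
      simp only [Matrix.transpose_apply, Matrix.of_apply]
      exact gram (tt (eH h)) eR l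
    calc p a = ∑ b, nuf p ε b * ∏ l, ggf ε (b l) (a l) := (main_id p ε h2ne a).symm
      _ = ∑ h, nuf p ε (eH h) * ∏ l, ggf ε (eH h l) (a l) :=
          (Equiv.sum_comp eH (fun b => nuf p ε b * ∏ l, ggf ε (b l) (a l))).symm
      _ = _ := by
          refine Finset.sum_congr rfl fun h _ => ?_
          congr 1
          refine Finset.prod_congr rfl fun l _ => ?_
          rw [hentry h l, zero_add]
          simp only [htt]
          have hlog := logistic (ggf ε (eH h l) true) (hg0 _) (hg1 _)
          cases hab : a l
          · rw [if_neg (by simp), hlog]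
            cases hb : eH h l <;> simp [ggf]
          · rw [if_pos rfl, hlog]
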